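/- Let i and j be real numbers with 0 < i, j < 1 and i + j = 1, set σ := min{i, j}, and let a, b ∈ ℝ. If liminf_{q→∞} q^{1/σ} · max{‖qa‖, ‖qb‖} = 0, where the liminf is over positive integers q, then there is no x ∈ ℝ with (x, ax + b) ∈ Bad(i,j); that is, Bad(i,j) ∩ {(x, ax + b) : x ∈ ℝ} = ∅. -/

import Mathlib

open Filter Set

/-- Distance from a real number to the nearest integer. -/
noncomputable def distNearestInt (t : ℝ) : ℝ := |t - round t|

/-- The inhomogeneous set `Bad_θ(i,j)` of `(i,j)`-badly approximable pairs;
the homogeneous set `Bad(i,j)` is `badPair i j (0, 0)`. -/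
def badPair (i j : ℝ) (θ : ℝ × ℝ) : Set (ℝ × ℝ) :=
  {p : ℝ × ℝ | ∃ c : ℝ, 0 < c ∧ ∀ q : ℕ, 0 < q →
    c / (q : ℝ) < max (distNearestInt ((q : ℝ) * p.1 - θ.1) ^ (1 / i))
                      (distNearestInt ((q : ℝ) * p.2 - θ.2) ^ (1 / j))}

lemma distNearestInt_nonneg (t : ℝ) : 0 ≤ distNearestInt t := abs_nonneg _

lemma distNearestInt_le (t : ℝ) (k : ℤ) : distNearestInt t ≤ |t - k| := by
  unfold distNearestInt
  rcases le_or_gt (1/2 : ℝ) |t - k| with h | h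
  · exact (abs_sub_round t).trans h
  · have h' := abs_lt.mp h
    have h0 : round (t - (k:ℝ)) = 0 :=
      round_eq_zero_iff.mpr ⟨by linarith [h'.1], by linarith [h'.2]⟩
    have h1 : round t = k := by
      have := round_sub_intCast t k
      omega
    rw [h1]

lemma dirichlet' (z : ℝ) (M : ℕ) (hM : 0 < M) :
    ∃ n' jj : ℤ, 0 < n' ∧ n' ≤ M ∧ |(n':ℝ) * z - jj| ≤ 1/(M+1) := by
  obtain ⟨jj, n', h1, h2, h3⟩ := Real.exists_int_int_abs_mul_sub_le z hM
  exact ⟨n', jj, h1, h2, by exact_mod_cast h3⟩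

set_option maxHeartbeats 1000000 in
lemma construct (i j c x y : ℝ) (hi0 : 0 < i) (hj0 : 0 < j) (hij : i + j = 1)
    (hc0 : 0 < c) (hc1 : c ≤ 1/2)
    (N : ℕ) (hN1 : 1 ≤ N)
    (p s : ℤ) (q : ℕ) (hq : 0 < q) (θ : ℝ)
    (hrel : (p:ℝ) * x - (q:ℝ) * y = (s:ℝ) - θ)
    (hp : 3 * |(p:ℝ)| ≤ c ^ j * (N:ℝ) ^ i)
    (hqN : 3 * (q:ℝ) ≤ c ^ i * (N:ℝ) ^ j)
    (hθ : |θ| ≤ (c / N) ^ i * (c / N) ^ j / 6) :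
    ∃ n : ℕ, 0 < n ∧ n ≤ N ∧ distNearestInt ((n:ℝ) * x) ≤ (c / N) ^ i ∧
      distNearestInt ((n:ℝ) * y) ≤ (c / N) ^ j := by
  have hNpos : (0:ℝ) < N := by exact_mod_cast hN1
  set α := (c / (N:ℝ)) ^ i with hαdef
  set β := (c / (N:ℝ)) ^ j with hβdef
  have hcN : 0 < c / (N:ℝ) := div_pos hc0 hNpos
  have hcN1 : c / (N:ℝ) < 1 := by
    have h1 : c / (N:ℝ) ≤ c := div_le_self hc0.le (by exact_mod_cast hN1)
    linarith
  have hα0 : 0 < α := Real.rpow_pos_of_pos hcN i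
  have hβ0 : 0 < β := Real.rpow_pos_of_pos hcN j
  have hα1 : α < 1 := Real.rpow_lt_one hcN.le hcN1 hi0
  have hβ1 : β < 1 := Real.rpow_lt_one hcN.le hcN1 hj0
  have hαβ : α * β = c / N := by
    rw [hαdef, hβdef, ← Real.rpow_add hcN, hij, Real.rpow_one]
  have hNi : (0:ℝ) < (N:ℝ) ^ i := Real.rpow_pos_of_pos hNpos i
  have hNj : (0:ℝ) < (N:ℝ) ^ j := Real.rpow_pos_of_pos hNpos j
  have hNij : (N:ℝ) ^ i * (N:ℝ) ^ j = N := by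
    rw [← Real.rpow_add hNpos, hij, Real.rpow_one]
  have hαN : α * N = c ^ i * (N:ℝ) ^ j := by
    rw [hαdef, Real.div_rpow hc0.le hNpos.le, div_mul_eq_mul_div, eq_comm, eq_div_iff hNi.ne']
    linear_combination c ^ i * hNij
  have hβN : β * N = c ^ j * (N:ℝ) ^ i := by
    rw [hβdef, Real.div_rpow hc0.le hNpos.le, div_mul_eq_mul_div, eq_comm, eq_div_iff hNj.ne']
    linear_combination c ^ j * hNij
  -- gcd setup
  set g : ℕ := Int.gcd p q with hgdef
  have hg0 : 0 < g := Int.gcd_pos_iff.mpr (Or.inr (by exact_mod_cast hq.ne'))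
  obtain ⟨p', q', hcop, hpf, hqf⟩ := Int.exists_gcd_one (m := p) (n := (q:ℤ)) (by exact_mod_cast hg0)
  have hq'pos : (0:ℤ) < q' := by
    rcases le_or_gt q' 0 with h | h
    · exfalso
      have h2 : (q:ℤ) ≤ 0 := by
        rw [hqf]
        exact mul_nonpos_of_nonpos_of_nonneg h (by positivity)
      omega
    · exact h
  obtain ⟨u, v, huv⟩ := Int.isCoprime_iff_gcd_eq_one.mpr hcop
  set k₀ : ℤ := u * s with hk0def
  set m₀ : ℤ := -(v * s) with hm0def
  set X : ℝ := (g:ℝ) * x - (k₀:ℝ) with hXdef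
  set Y : ℝ := (g:ℝ) * y - (m₀:ℝ) with hYdef
  have hpr : (p:ℝ) = (p':ℝ) * (g:ℝ) := by exact_mod_cast congrArg (Int.cast : ℤ → ℝ) hpf
  have hqr : (q:ℝ) = (q':ℝ) * (g:ℝ) := by exact_mod_cast congrArg (Int.cast : ℤ → ℝ) hqf
  have huvr : (u:ℝ) * (p':ℝ) + (v:ℝ) * (q':ℝ) = 1 := by exact_mod_cast congrArg (Int.cast : ℤ → ℝ) huv
  have hkey : (p':ℝ) * X - (q':ℝ) * Y = -θ := by
    rw [hXdef, hYdef, hk0def, hm0def]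
    push_cast
    linear_combination hrel - x * hpr + y * hqr - (s:ℝ) * huvr
  have hq'r : (0:ℝ) < (q':ℝ) := by exact_mod_cast hq'pos
  have hq'1 : (1:ℝ) ≤ (q':ℝ) := by exact_mod_cast hq'pos
  have hgr : (0:ℝ) < (g:ℝ) := by exact_mod_cast hg0
  have hgq : (g:ℝ) * (q':ℝ) = q := by rw [hqr]; ring
  -- finishing helper
  have hfin : ∀ n' jj : ℤ, 0 < n' → (g:ℝ) * (n':ℝ) ≤ N →
      |(n':ℝ) * X - (jj:ℝ) * (q':ℝ)| ≤ α → |(n':ℝ) * Y - (jj:ℝ) * (p':ℝ)| ≤ β →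
      ∃ n : ℕ, 0 < n ∧ n ≤ N ∧ distNearestInt ((n:ℝ) * x) ≤ (c / N) ^ i ∧
        distNearestInt ((n:ℝ) * y) ≤ (c / N) ^ j := by
    intro n' jj hn'0 hle hu hv
    have hn'nat : ((n'.toNat : ℤ)) = n' := Int.toNat_of_nonneg hn'0.le
    have hn'r : ((n'.toNat : ℕ) : ℝ) = (n' : ℝ) := by exact_mod_cast congrArg (Int.cast : ℤ → ℝ) hn'nat
    refine ⟨g * n'.toNat, ?_, ?_, ?_, ?_⟩
    · have : 0 < n'.toNat := by omega
      positivity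
    · have hcast : ((g * n'.toNat : ℕ) : ℝ) = (g:ℝ) * (n':ℝ) := by push_cast [hn'r]; ring
      have : ((g * n'.toNat : ℕ) : ℝ) ≤ (N : ℝ) := by rw [hcast]; exact hle
      exact_mod_cast this
    · refine (distNearestInt_le _ (n' * k₀ + jj * q')).trans ?_
      have harg : ((g * n'.toNat : ℕ) : ℝ) * x - ((n' * k₀ + jj * q' : ℤ) : ℝ)
          = (n':ℝ) * X - (jj:ℝ) * (q':ℝ) := by
        rw [hXdef]; push_cast [hn'r]; ring
      rw [harg]; exact hu
    · refine (distNearestInt_le _ (n' * m₀ + jj * p')).trans ?_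
      have harg : ((g * n'.toNat : ℕ) : ℝ) * y - ((n' * m₀ + jj * p' : ℤ) : ℝ)
          = (n':ℝ) * Y - (jj:ℝ) * (p':ℝ) := by
        rw [hYdef]; push_cast [hn'r]; ring
      rw [harg]; exact hv
  rcases le_or_gt (|(p':ℝ)| * α) ((q':ℝ) * β) with hcase | hcase
  · -- Branch X : Dirichlet on X / q'
    set M := ⌈2 * (q':ℝ) / α⌉₊ with hMdef
    have hq2α : (1:ℝ) ≤ (q':ℝ) / α := (one_le_div hα0).mpr (hα1.le.trans hq'1)
    have hM0 : 0 < M := Nat.ceil_pos.mpr (by positivity)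
    have hMge : 2 * (q':ℝ) / α ≤ M := Nat.le_ceil _
    have hMle : (M:ℝ) ≤ 3 * (q':ℝ) / α := by
      have h1 := Nat.ceil_lt_add_one (by positivity : (0:ℝ) ≤ 2 * (q':ℝ) / α)
      have h2 : 3 * (q':ℝ) / α = 2 * (q':ℝ) / α + (q':ℝ) / α := by ring
      rw [hMdef]; linarith
    obtain ⟨n', jj, hn'0, hn'M, hdir⟩ := dirichlet' (X / (q':ℝ)) M hM0
    have hn'Mr : (n':ℝ) ≤ M := by exact_mod_cast hn'M
    have hu : |(n':ℝ) * X - (jj:ℝ) * (q':ℝ)| ≤ α / 2 := by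
      have h1 : (n':ℝ) * X - jj * q' = ((n':ℝ) * (X / (q':ℝ)) - jj) * q' := by
        field_simp
      rw [h1, abs_mul, abs_of_pos hq'r]
      have h3 : |(n':ℝ) * (X / (q':ℝ)) - jj| * q' ≤ (1 / (M + 1)) * q' :=
        mul_le_mul_of_nonneg_right hdir hq'r.le
      refine h3.trans ?_
      rw [div_mul_eq_mul_div, one_mul, div_le_iff₀ (by positivity)]
      have h4 : 2 * (q':ℝ) ≤ α * M := by
        calc 2 * (q':ℝ) = α * (2 * q' / α) := by field_simp
          _ ≤ α * M := mul_le_mul_of_nonneg_left hMge hα0.le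
      linarith [hα0]
    have hvq : (q':ℝ) * ((n':ℝ) * Y - (jj:ℝ) * (p':ℝ)) = (p':ℝ) * ((n':ℝ) * X - (jj:ℝ) * (q':ℝ)) + (n':ℝ) * θ := by
      linear_combination (-(n':ℝ)) * hkey
    have hMθ : (M:ℝ) * |θ| ≤ (q':ℝ) * β / 2 := by
      calc (M:ℝ) * |θ| ≤ (3 * (q':ℝ) / α) * (α * β / 6) := by
            exact mul_le_mul hMle hθ (abs_nonneg _) (by positivity)
        _ = (q':ℝ) * β / 2 := by field_simp; ring
    have hv : |(n':ℝ) * Y - (jj:ℝ) * (p':ℝ)| ≤ β := by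
      have habs : (q':ℝ) * |(n':ℝ) * Y - (jj:ℝ) * (p':ℝ)| ≤ |(p':ℝ)| * (α / 2) + (M:ℝ) * |θ| := by
        rw [← abs_of_pos hq'r, ← abs_mul, hvq]
        refine (abs_add_le _ _).trans ?_
        have e1 : |(p':ℝ) * ((n':ℝ) * X - (jj:ℝ) * (q':ℝ))| ≤ |(p':ℝ)| * (α / 2) := by
          rw [abs_mul]; exact mul_le_mul_of_nonneg_left hu (abs_nonneg _)
        have e2 : |(n':ℝ) * θ| ≤ (M:ℝ) * |θ| := by
          rw [abs_mul, abs_of_pos (by exact_mod_cast hn'0 : (0:ℝ) < (n':ℝ))]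
          exact mul_le_mul_of_nonneg_right hn'Mr (abs_nonneg _)
        linarith
      have hq'v : (q':ℝ) * |(n':ℝ) * Y - (jj:ℝ) * (p':ℝ)| ≤ (q':ℝ) * β := by
        linarith [habs, hMθ, hcase]
      exact le_of_mul_le_mul_left hq'v hq'r
    have hgn' : (g:ℝ) * (n':ℝ) ≤ N := by
      have h1 : (g:ℝ) * (n':ℝ) ≤ (g:ℝ) * (3 * (q':ℝ) / α) :=
        mul_le_mul_of_nonneg_left (hn'Mr.trans hMle) hgr.le
      have h3 : (g:ℝ) * (3 * (q':ℝ) / α) = 3 * (q:ℝ) / α := by rw [← hgq]; ring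
      have h4 : 3 * (q:ℝ) / α ≤ N := by
        rw [div_le_iff₀ hα0]
        calc 3 * (q:ℝ) ≤ c ^ i * (N:ℝ) ^ j := hqN
          _ = α * N := hαN.symm
          _ = N * α := mul_comm _ _
      linarith
    exact hfin n' jj hn'0 hgn' (hu.trans (by linarith)) hv
  · -- Branch Y : Dirichlet on Y / p'
    have hp'ne : (p':ℝ) ≠ 0 := by
      intro h0
      rw [h0, abs_zero, zero_mul] at hcase
      nlinarith [hq'r, hβ0]
    have hp'1 : (1:ℝ) ≤ |(p':ℝ)| := by
      have h0 : p' ≠ 0 := by exact_mod_cast hp'ne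
      have h1 : (1:ℤ) ≤ |p'| := Int.one_le_abs (by omega)
      calc (1:ℝ) = ((1:ℤ):ℝ) := by norm_num
        _ ≤ ((|p'| : ℤ) : ℝ) := by exact_mod_cast h1
        _ = |(p':ℝ)| := by push_cast; ring
    have hp'pos : (0:ℝ) < |(p':ℝ)| := by linarith
    set M := ⌈2 * |(p':ℝ)| / β⌉₊ with hMdef
    have hq2β : (1:ℝ) ≤ |(p':ℝ)| / β := (one_le_div hβ0).mpr (hβ1.le.trans hp'1)
    have hM0 : 0 < M := Nat.ceil_pos.mpr (by positivity)
    have hMge : 2 * |(p':ℝ)| / β ≤ M := Nat.le_ceil _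
    have hMle : (M:ℝ) ≤ 3 * |(p':ℝ)| / β := by
      have h1 := Nat.ceil_lt_add_one (by positivity : (0:ℝ) ≤ 2 * |(p':ℝ)| / β)
      have h2 : 3 * |(p':ℝ)| / β = 2 * |(p':ℝ)| / β + |(p':ℝ)| / β := by ring
      rw [hMdef]; linarith
    obtain ⟨n', jj, hn'0, hn'M, hdir⟩ := dirichlet' (Y / (p':ℝ)) M hM0
    have hn'Mr : (n':ℝ) ≤ M := by exact_mod_cast hn'M
    have hv : |(n':ℝ) * Y - (jj:ℝ) * (p':ℝ)| ≤ β / 2 := by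
      have h1 : (n':ℝ) * Y - jj * p' = ((n':ℝ) * (Y / (p':ℝ)) - jj) * p' := by
        field_simp
      rw [h1, abs_mul]
      have h3 : |(n':ℝ) * (Y / (p':ℝ)) - jj| * |(p':ℝ)| ≤ (1 / (M + 1)) * |(p':ℝ)| :=
        mul_le_mul_of_nonneg_right hdir (abs_nonneg _)
      refine h3.trans ?_
      rw [div_mul_eq_mul_div, one_mul, div_le_iff₀ (by positivity)]
      have h4 : 2 * |(p':ℝ)| ≤ β * M := by
        calc 2 * |(p':ℝ)| = β * (2 * |(p':ℝ)| / β) := by field_simp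
          _ ≤ β * M := mul_le_mul_of_nonneg_left hMge hβ0.le
      linarith [hβ0]
    have hpu : (p':ℝ) * ((n':ℝ) * X - (jj:ℝ) * (q':ℝ))
        = (q':ℝ) * ((n':ℝ) * Y - (jj:ℝ) * (p':ℝ)) - (n':ℝ) * θ := by
      linear_combination (n':ℝ) * hkey
    have hMθ : (M:ℝ) * |θ| ≤ |(p':ℝ)| * α / 2 := by
      calc (M:ℝ) * |θ| ≤ (3 * |(p':ℝ)| / β) * (α * β / 6) := by
            exact mul_le_mul hMle hθ (abs_nonneg _) (by positivity)
        _ = |(p':ℝ)| * α / 2 := by field_simp; ring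
    have hu : |(n':ℝ) * X - (jj:ℝ) * (q':ℝ)| ≤ α := by
      have habs : |(p':ℝ)| * |(n':ℝ) * X - (jj:ℝ) * (q':ℝ)| ≤ (q':ℝ) * (β / 2) + (M:ℝ) * |θ| := by
        rw [← abs_mul, hpu]
        refine (abs_sub _ _).trans ?_
        have e1 : |(q':ℝ) * ((n':ℝ) * Y - (jj:ℝ) * (p':ℝ))| ≤ (q':ℝ) * (β / 2) := by
          rw [abs_mul, abs_of_pos hq'r]
          exact mul_le_mul_of_nonneg_left hv hq'r.le
        have e2 : |(n':ℝ) * θ| ≤ (M:ℝ) * |θ| := by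
          rw [abs_mul, abs_of_pos (by exact_mod_cast hn'0 : (0:ℝ) < (n':ℝ))]
          exact mul_le_mul_of_nonneg_right hn'Mr (abs_nonneg _)
        linarith
      have hpv : |(p':ℝ)| * |(n':ℝ) * X - (jj:ℝ) * (q':ℝ)| ≤ |(p':ℝ)| * α := by
        linarith [habs, hMθ, hcase.le]
      exact le_of_mul_le_mul_left hpv hp'pos
    have hgn' : (g:ℝ) * (n':ℝ) ≤ N := by
      have h1 : (g:ℝ) * (n':ℝ) ≤ (g:ℝ) * (3 * |(p':ℝ)| / β) :=
        mul_le_mul_of_nonneg_left (hn'Mr.trans hMle) hgr.le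
      have hgp : (g:ℝ) * |(p':ℝ)| = |(p:ℝ)| := by
        rw [hpr, abs_mul, abs_of_pos hgr]; ring
      have h3 : (g:ℝ) * (3 * |(p':ℝ)| / β) = 3 * |(p:ℝ)| / β := by
        rw [← hgp]; ring
      have h4 : 3 * |(p:ℝ)| / β ≤ N := by
        rw [div_le_iff₀ hβ0]
        calc 3 * |(p:ℝ)| ≤ c ^ j * (N:ℝ) ^ i := hp
          _ = β * N := hβN.symm
          _ = N * β := mul_comm _ _
      linarith
    exact hfin n' jj hn'0 hgn' hu (hv.trans (by linarith))

set_option maxHeartbeats 1000000 in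
theorem stmt7 (i j a b : ℝ)
    (hi0 : 0 < i) (hi1 : i < 1) (hj0 : 0 < j) (hj1 : j < 1) (hij : i + j = 1)
    (hdio : Filter.atTop.liminf (fun q : ℕ =>
        ENNReal.ofReal ((q : ℝ) ^ (1 / min i j) *
          max (distNearestInt ((q : ℝ) * a)) (distNearestInt ((q : ℝ) * b)))) = 0) :
    badPair i j (0, 0) ∩ {p : ℝ × ℝ | ∃ x : ℝ, p = (x, a * x + b)} = ∅ := by
  rw [eq_empty_iff_forall_notMem]
  rintro P ⟨hmem, x, rfl⟩
  obtain ⟨c₀, hc₀, hbad₀⟩ := hmem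
  have hbad : ∀ n : ℕ, 0 < n → c₀ / n < max (distNearestInt ((n:ℝ) * x) ^ (1/i))
      (distNearestInt ((n:ℝ) * (a * x + b)) ^ (1/j)) := by
    intro n hn
    simpa using hbad₀ n hn
  set σ := min i j with hσdef
  have hσ0 : 0 < σ := lt_min hi0 hj0
  have hσi : σ ≤ i := min_le_left _ _
  have hσj : σ ≤ j := min_le_right _ _
  set y := a * x + b with hydef
  set c := min c₀ (1/2 : ℝ) with hcdef
  have hc0 : 0 < c := lt_min hc₀ (by norm_num)
  have hc1 : c ≤ 1/2 := min_le_right _ _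
  have hcc₀ : c ≤ c₀ := min_le_left _ _
  have hci0 : (0:ℝ) < c ^ i := Real.rpow_pos_of_pos hc0 i
  have hcj0 : (0:ℝ) < c ^ j := Real.rpow_pos_of_pos hc0 j
  have hci1 : c ^ i ≤ 1 := Real.rpow_le_one hc0.le (by linarith) hi0.le
  have hcj1 : c ^ j ≤ 1 := Real.rpow_le_one hc0.le (by linarith) hj0.le
  set K := |a| + 1 with hKdef
  set Cx := |x| + 1 with hCxdef
  have hK0 : (0:ℝ) < K := by positivity
  have hK1 : (1:ℝ) ≤ K := by rw [hKdef]; linarith [abs_nonneg a]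
  have hCx0 : (0:ℝ) < Cx := by positivity
  set B := 2 * max ((4 / c ^ i) ^ (1/j)) ((4 * K / c ^ j) ^ (1/i)) with hBdef
  have hB1 : (4 / c ^ i) ^ (1/j) ≥ 1 := by
    calc (1:ℝ) = (1:ℝ) ^ (1/j) := (Real.one_rpow _).symm
      _ ≤ (4 / c ^ i) ^ (1/j) := by
          apply Real.rpow_le_rpow zero_le_one _ (by positivity)
          rw [le_div_iff₀ hci0]; linarith
  have hB2 : (4 * K / c ^ j) ^ (1/i) ≥ 1 := by
    calc (1:ℝ) = (1:ℝ) ^ (1/i) := (Real.one_rpow _).symm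
      _ ≤ (4 * K / c ^ j) ^ (1/i) := by
          apply Real.rpow_le_rpow zero_le_one _ (by positivity)
          rw [le_div_iff₀ hcj0]; nlinarith [hcj1, hK1]
  have hB2le : (2:ℝ) ≤ B := by
    have h := le_max_left ((4 / c ^ i) ^ (1/j)) ((4 * K / c ^ j) ^ (1/i))
    rw [hBdef]; linarith
  have hB0 : (0:ℝ) < B := by linarith
  set ε := c / (6 * B * Cx) with hεdef
  have hε0 : 0 < ε := by positivity
  -- extract a good q
  have hfreq : ∃ᶠ Q : ℕ in atTop,
      ENNReal.ofReal ((Q : ℝ) ^ (1 / σ) *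
        max (distNearestInt ((Q : ℝ) * a)) (distNearestInt ((Q : ℝ) * b))) < ENNReal.ofReal ε := by
    by_contra hcon
    rw [not_frequently] at hcon
    have hle : ENNReal.ofReal ε ≤ atTop.liminf (fun Q : ℕ =>
        ENNReal.ofReal ((Q : ℝ) ^ (1 / σ) *
          max (distNearestInt ((Q : ℝ) * a)) (distNearestInt ((Q : ℝ) * b)))) :=
      le_liminf_of_le (by isBoundedDefault) (hcon.mono fun Q hQ => not_lt.mp hQ)
    rw [hdio] at hle
    have h2 : (0:ENNReal) < ENNReal.ofReal ε := ENNReal.ofReal_pos.mpr hε0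
    exact absurd (le_antisymm hle zero_le) (by simpa using h2.ne')
  obtain ⟨q, hq1, hq0⟩ := (hfreq.and_eventually (eventually_gt_atTop 0)).exists
  have hqlt : (q : ℝ) ^ (1 / σ) *
      max (distNearestInt ((q : ℝ) * a)) (distNearestInt ((q : ℝ) * b)) < ε :=
    (ENNReal.ofReal_lt_ofReal_iff hε0).mp hq1
  have hqr : (0:ℝ) < q := by exact_mod_cast hq0
  have hq1r : (1:ℝ) ≤ q := by exact_mod_cast hq0
  have hqσ1 : (1:ℝ) ≤ (q:ℝ) ^ (1/σ) := by
    calc (1:ℝ) = (1:ℝ) ^ (1/σ) := (Real.one_rpow _).symm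
      _ ≤ (q:ℝ) ^ (1/σ) := Real.rpow_le_rpow zero_le_one hq1r (by positivity)
  have hqσ0 : (0:ℝ) < (q:ℝ) ^ (1/σ) := by linarith
  set Δ := max (distNearestInt ((q : ℝ) * a)) (distNearestInt ((q : ℝ) * b)) with hΔdef
  have hΔ0 : 0 ≤ Δ := le_trans (distNearestInt_nonneg _) (le_max_left _ _)
  have hΔa : |(q:ℝ) * a - round ((q:ℝ) * a)| ≤ Δ := le_max_left _ _
  have hΔb : |(q:ℝ) * b - round ((q:ℝ) * b)| ≤ Δ := le_max_right _ _
  set p : ℤ := round ((q:ℝ) * a) with hpdef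
  set r : ℤ := round ((q:ℝ) * b) with hrdef
  set s : ℤ := -r with hsdef
  set θ : ℝ := ((q:ℝ) * a - p) * x + ((q:ℝ) * b - r) with hθdef
  have hrel : (p:ℝ) * x - (q:ℝ) * y = (s:ℝ) - θ := by
    rw [hydef, hθdef, hsdef]; push_cast; ring
  have hθb : |θ| ≤ Δ * Cx := by
    calc |θ| ≤ |((q:ℝ) * a - p) * x| + |(q:ℝ) * b - r| := abs_add_le _ _
      _ = |(q:ℝ) * a - p| * |x| + |(q:ℝ) * b - r| := by rw [abs_mul]
      _ ≤ Δ * |x| + Δ := by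
          have h1 : |(q:ℝ) * a - p| * |x| ≤ Δ * |x| :=
            mul_le_mul_of_nonneg_right hΔa (abs_nonneg _)
          linarith [hΔb]
      _ = Δ * Cx := by rw [hCxdef]; ring
  -- the scale N
  set z₁ := (4 * (q:ℝ) / c ^ i) ^ (1/j) with hz₁def
  set z₂ := (4 * K * (q:ℝ) / c ^ j) ^ (1/i) with hz₂def
  have hKq1 : (1:ℝ) ≤ K * q := by
    calc (1:ℝ) = 1 * 1 := by norm_num
      _ ≤ K * q := mul_le_mul hK1 hq1r zero_le_one hK0.le
  have hz₁base : (1:ℝ) ≤ 4 * (q:ℝ) / c ^ i := by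
    rw [le_div_iff₀ hci0]; linarith [hci1, hq1r]
  have hz₂base : (1:ℝ) ≤ 4 * K * (q:ℝ) / c ^ j := by
    rw [le_div_iff₀ hcj0]
    have : 4 * K * (q:ℝ) = 4 * (K * q) := by ring
    linarith [hcj1, hKq1]
  have hz₁1 : (1:ℝ) ≤ z₁ := by
    calc (1:ℝ) = (1:ℝ) ^ (1/j) := (Real.one_rpow _).symm
      _ ≤ z₁ := Real.rpow_le_rpow zero_le_one hz₁base (by positivity)
  have hz₂1 : (1:ℝ) ≤ z₂ := by
    calc (1:ℝ) = (1:ℝ) ^ (1/i) := (Real.one_rpow _).symm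
      _ ≤ z₂ := Real.rpow_le_rpow zero_le_one hz₂base (by positivity)
  set N : ℕ := max 1 (max ⌈z₁⌉₊ ⌈z₂⌉₊) with hNdef
  have hN1 : 1 ≤ N := le_max_left _ _
  have hNr1 : (1:ℝ) ≤ N := by exact_mod_cast hN1
  have hNpos : (0:ℝ) < N := by linarith
  have hz₁N : z₁ ≤ N := by
    calc z₁ ≤ (⌈z₁⌉₊ : ℝ) := Nat.le_ceil _
      _ ≤ N := by exact_mod_cast le_trans (le_max_left _ _) (le_max_right 1 _)
  have hz₂N : z₂ ≤ N := by
    calc z₂ ≤ (⌈z₂⌉₊ : ℝ) := Nat.le_ceil _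
      _ ≤ N := by exact_mod_cast le_trans (le_max_right _ _) (le_max_right 1 _)
  have hqN : 3 * (q:ℝ) ≤ c ^ i * (N:ℝ) ^ j := by
    have h1 : z₁ ^ (j:ℝ) ≤ (N:ℝ) ^ j :=
      Real.rpow_le_rpow (by positivity) hz₁N hj0.le
    have h2 : z₁ ^ (j:ℝ) = 4 * (q:ℝ) / c ^ i := by
      rw [hz₁def, ← Real.rpow_mul (by positivity), one_div, inv_mul_cancel₀ hj0.ne', Real.rpow_one]
    rw [h2] at h1
    calc 3 * (q:ℝ) ≤ 4 * (q:ℝ) := by linarith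
      _ = c ^ i * (4 * (q:ℝ) / c ^ i) := by field_simp
      _ ≤ c ^ i * (N:ℝ) ^ j := mul_le_mul_of_nonneg_left h1 hci0.le
  have hpK : |(p:ℝ)| ≤ K * q := by
    have h1 : |(q:ℝ) * a| = |a| * q := by
      rw [abs_mul, abs_of_pos hqr]; ring
    have h2 : |(p:ℝ)| ≤ |(q:ℝ) * a| + |(q:ℝ) * a - p| := by
      have e : (p:ℝ) = (q:ℝ) * a - ((q:ℝ) * a - p) := by ring
      calc |(p:ℝ)| = |(q:ℝ) * a - ((q:ℝ) * a - p)| := by rw [← e]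
        _ ≤ |(q:ℝ) * a| + |(q:ℝ) * a - p| := abs_sub _ _
    have h3 : |(q:ℝ) * a - p| ≤ 1/2 := abs_sub_round _
    have h4 : (1:ℝ)/2 ≤ q := by linarith
    calc |(p:ℝ)| ≤ |a| * q + 1/2 := by rw [h1] at h2; linarith
      _ ≤ |a| * q + q := by linarith
      _ = K * q := by rw [hKdef]; ring
  have hp : 3 * |(p:ℝ)| ≤ c ^ j * (N:ℝ) ^ i := by
    have h1 : z₂ ^ (i:ℝ) ≤ (N:ℝ) ^ i :=
      Real.rpow_le_rpow (by positivity) hz₂N hi0.le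
    have h2 : z₂ ^ (i:ℝ) = 4 * K * (q:ℝ) / c ^ j := by
      rw [hz₂def, ← Real.rpow_mul (by positivity), one_div, inv_mul_cancel₀ hi0.ne', Real.rpow_one]
    rw [h2] at h1
    calc 3 * |(p:ℝ)| ≤ 4 * (K * q) := by linarith [abs_nonneg (p:ℝ), hpK]
      _ = c ^ j * (4 * K * (q:ℝ) / c ^ j) := by field_simp
      _ ≤ c ^ j * (N:ℝ) ^ i := mul_le_mul_of_nonneg_left h1 hcj0.le
  -- bound N from above
  have hNB : (N:ℝ) ≤ B * (q:ℝ) ^ (1/σ) := by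
    have hc₁ : ⌈z₁⌉₊ < z₁ + 1 := Nat.ceil_lt_add_one (by positivity)
    have hc₂ : ⌈z₂⌉₊ < z₂ + 1 := Nat.ceil_lt_add_one (by positivity)
    have hqj : (q:ℝ) ^ (1/j) ≤ (q:ℝ) ^ (1/σ) :=
      Real.rpow_le_rpow_of_exponent_le hq1r (by
        apply one_div_le_one_div_of_le hσ0 hσj)
    have hqi : (q:ℝ) ^ (1/i) ≤ (q:ℝ) ^ (1/σ) :=
      Real.rpow_le_rpow_of_exponent_le hq1r (by
        apply one_div_le_one_div_of_le hσ0 hσi)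
    have hz₁split : z₁ = (4 / c ^ i) ^ (1/j) * (q:ℝ) ^ (1/j) := by
      rw [hz₁def, ← Real.mul_rpow (by positivity) (by positivity)]
      congr 1
      field_simp
    have hz₂split : z₂ = (4 * K / c ^ j) ^ (1/i) * (q:ℝ) ^ (1/i) := by
      rw [hz₂def, ← Real.mul_rpow (by positivity) (by positivity)]
      congr 1
      field_simp
    have hb1 : z₁ ≤ (B/2) * (q:ℝ) ^ (1/σ) := by
      rw [hz₁split, hBdef]
      have := le_max_left ((4 / c ^ i) ^ (1/j)) ((4 * K / c ^ j) ^ (1/i))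
      calc (4 / c ^ i) ^ (1/j) * (q:ℝ) ^ (1/j)
          ≤ (4 / c ^ i) ^ (1/j) * (q:ℝ) ^ (1/σ) := by
            apply mul_le_mul_of_nonneg_left hqj (by positivity)
        _ ≤ (2 * max ((4 / c ^ i) ^ (1/j)) ((4 * K / c ^ j) ^ (1/i)) / 2) * (q:ℝ) ^ (1/σ) := by
            apply mul_le_mul_of_nonneg_right _ (by positivity)
            linarith
    have hb2 : z₂ ≤ (B/2) * (q:ℝ) ^ (1/σ) := by
      rw [hz₂split, hBdef]
      have := le_max_right ((4 / c ^ i) ^ (1/j)) ((4 * K / c ^ j) ^ (1/i))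
      calc (4 * K / c ^ j) ^ (1/i) * (q:ℝ) ^ (1/i)
          ≤ (4 * K / c ^ j) ^ (1/i) * (q:ℝ) ^ (1/σ) := by
            apply mul_le_mul_of_nonneg_left hqi (by positivity)
        _ ≤ (2 * max ((4 / c ^ i) ^ (1/j)) ((4 * K / c ^ j) ^ (1/i)) / 2) * (q:ℝ) ^ (1/σ) := by
            apply mul_le_mul_of_nonneg_right _ (by positivity)
            linarith
    have hBq1 : (1:ℝ) ≤ B * (q:ℝ) ^ (1/σ) := by
      calc (1:ℝ) = 1 * 1 := by norm_num
        _ ≤ B * (q:ℝ) ^ (1/σ) := mul_le_mul (by linarith) hqσ1 zero_le_one hB0.le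
    have hcast : (N:ℝ) = max 1 (max (⌈z₁⌉₊ : ℝ) (⌈z₂⌉₊ : ℝ)) := by
      rw [hNdef]; push_cast [Nat.cast_max]; norm_num
    rw [hcast]
    apply max_le hBq1
    apply max_le
    · calc (⌈z₁⌉₊ : ℝ) ≤ z₁ + 1 := hc₁.le
        _ ≤ 2 * z₁ := by linarith
        _ ≤ 2 * ((B/2) * (q:ℝ) ^ (1/σ)) := by linarith
        _ = B * (q:ℝ) ^ (1/σ) := by ring
    · calc (⌈z₂⌉₊ : ℝ) ≤ z₂ + 1 := hc₂.le
        _ ≤ 2 * z₂ := by linarith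
        _ ≤ 2 * ((B/2) * (q:ℝ) ^ (1/σ)) := by linarith
        _ = B * (q:ℝ) ^ (1/σ) := by ring
  have hcN : (0:ℝ) < c / N := div_pos hc0 hNpos
  have hprod : (c / (N:ℝ)) ^ i * (c / N) ^ j = c / N := by
    rw [← Real.rpow_add hcN, hij, Real.rpow_one]
  have hθfin : |θ| ≤ (c / (N:ℝ)) ^ i * (c / N) ^ j / 6 := by
    rw [hprod]
    have hΔlt : Δ < ε / (q:ℝ) ^ (1/σ) := by
      rw [lt_div_iff₀ hqσ0]
      calc Δ * (q:ℝ) ^ (1/σ) = (q:ℝ) ^ (1/σ) * Δ := mul_comm _ _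
        _ < ε := hqlt
    have h1 : |θ| ≤ Δ * Cx := hθb
    have h2 : Δ * Cx ≤ ε * Cx / (q:ℝ) ^ (1/σ) := by
      calc Δ * Cx ≤ (ε / (q:ℝ) ^ (1/σ)) * Cx :=
            mul_le_mul_of_nonneg_right hΔlt.le hCx0.le
        _ = ε * Cx / (q:ℝ) ^ (1/σ) := by ring
    have hBne : B ≠ 0 := ne_of_gt hB0
    have hCxne : Cx ≠ 0 := ne_of_gt hCx0
    have h3 : ε * Cx = c / (6 * B) := by
      rw [hεdef]; field_simp
    have h4 : c / (6 * B) / (q:ℝ) ^ (1/σ) = c / (6 * (B * (q:ℝ) ^ (1/σ))) := by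
      rw [div_div, mul_assoc]
    have h5 : c / (6 * (B * (q:ℝ) ^ (1/σ))) ≤ c / (6 * N) := by
      apply div_le_div_of_nonneg_left hc0.le (by linarith)
      linarith [hNB]
    have h6 : c / (6 * (N:ℝ)) = c / N / 6 := by ring
    calc |θ| ≤ Δ * Cx := h1
      _ ≤ ε * Cx / (q:ℝ) ^ (1/σ) := h2
      _ = c / (6 * B) / (q:ℝ) ^ (1/σ) := by rw [h3]
      _ = c / (6 * (B * (q:ℝ) ^ (1/σ))) := h4
      _ ≤ c / (6 * N) := h5
      _ = c / N / 6 := h6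
  obtain ⟨n, hn0, hnN, hdx, hdy⟩ :=
    construct i j c x y hi0 hj0 hij hc0 hc1 N hN1 p s q hq0 θ hrel hp hqN hθfin
  have hb := hbad n hn0
  have hnr : (0:ℝ) < n := by exact_mod_cast hn0
  have hnNr : (n:ℝ) ≤ N := by exact_mod_cast hnN
  have h1 : distNearestInt ((n:ℝ) * x) ^ (1/i) ≤ c / N := by
    have := Real.rpow_le_rpow (distNearestInt_nonneg _) hdx (by positivity : (0:ℝ) ≤ 1/i)
    rwa [← Real.rpow_mul hcN.le, mul_one_div, div_self hi0.ne', Real.rpow_one] at this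
  have h2 : distNearestInt ((n:ℝ) * y) ^ (1/j) ≤ c / N := by
    have := Real.rpow_le_rpow (distNearestInt_nonneg _) hdy (by positivity : (0:ℝ) ≤ 1/j)
    rwa [← Real.rpow_mul hcN.le, mul_one_div, div_self hj0.ne', Real.rpow_one] at this
  have h3 : c / (N:ℝ) ≤ c₀ / n := by
    gcongr
  have h4 : max (distNearestInt ((n:ℝ) * x) ^ (1/i)) (distNearestInt ((n:ℝ) * y) ^ (1/j)) ≤ c₀ / n :=
    max_le (h1.trans h3) (h2.trans h3)
  exact absurd hb (not_lt.mpr h4)
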